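/- Let C be a linear code of dimension k over GF(q) whose set of distinct weights has size (q^k-1)/(q-1)+1, let m be the maximum weight of a codeword of C, and suppose there exists a vector x not in C such that the Hamming distances d(c,x) are pairwise distinct as c ranges over all q^k codewords of C. Then the code of dimension k+1 generated by the matrix obtained from a generator matrix G of C by appending m zero columns to G and adding the row (x | 1 ... 1) (with m ones) has exactly (q^{k+1}-1)/(q-1)+1 distinct weights. -/

import Mathlib

/-- Pad a vector with `m` zeros at the end. -/
def padZeros {F : Type*} [Zero F] (m : ℕ) {n : ℕ} (v : Fin n → F) : Fin (n + m) → F :=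
  Fin.append v 0

lemma hammingNorm_append {F : Type*} [Zero F] [DecidableEq F] {n m : ℕ}
    (u : Fin n → F) (v : Fin m → F) :
    hammingNorm (Fin.append u v) = hammingNorm u + hammingNorm v := by
  simp only [hammingNorm, Finset.card_filter]
  rw [Fin.sum_univ_add]
  simp [Fin.append_left, Fin.append_right]

lemma hammingNorm_neg' {F : Type*} [Field F] [DecidableEq F] {n : ℕ} (v : Fin n → F) :
    hammingNorm (-v) = hammingNorm v := by
  rw [← neg_one_smul F v]
  exact hammingNorm_smul (fun i => IsSMulRegular.of_smul_eq_one (by norm_num : (-1 : F) • (-1 : F) = 1)) v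

lemma hammingNorm_smul_ne_zero {F : Type*} [Field F] [DecidableEq F] {n : ℕ} {α : F}
    (hα : α ≠ 0) (v : Fin n → F) : hammingNorm (α • v) = hammingNorm v :=
  hammingNorm_smul (fun _ => IsSMulRegular.of_smul_eq_one
    (by rw [smul_eq_mul, inv_mul_cancel₀ hα] : α⁻¹ • α = (1 : F))) v

theorem extension_is_MWS {F : Type*} [Field F] [Fintype F] [DecidableEq F] {n k m : ℕ}
    (C : Submodule F (Fin n → F)) (hk : Module.finrank F C = k)
    (hw : {w : ℕ | ∃ c ∈ C, hammingNorm c = w}.ncard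
        = (Fintype.card F ^ k - 1) / (Fintype.card F - 1) + 1)
    (hm : IsGreatest {w : ℕ | ∃ c ∈ C, hammingNorm c = w} m)
    (x : Fin n → F) (hx : x ∉ C)
    (hdist : ∀ c₁ ∈ C, ∀ c₂ ∈ C, c₁ ≠ c₂ → hammingDist c₁ x ≠ hammingDist c₂ x) :
    Module.finrank F
      (Submodule.span F (padZeros m '' (C : Set (Fin n → F)) ∪ {Fin.append x 1})) = k + 1 ∧
    {w : ℕ | ∃ z ∈ Submodule.span F
        (padZeros m '' (C : Set (Fin n → F)) ∪ {Fin.append x 1}), hammingNorm z = w}.ncard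
      = (Fintype.card F ^ (k + 1) - 1) / (Fintype.card F - 1) + 1 := by
  classical
  set q := Fintype.card F with hq
  have hq2 : 2 ≤ q := Fintype.one_lt_card
  set y : Fin (n + m) → F := Fin.append x 1 with hy
  -- the padding linear map
  set pad : (Fin n → F) →ₗ[F] (Fin (n + m) → F) :=
    { toFun := padZeros m
      map_add' := by
        intro a b
        funext i
        refine Fin.addCases (fun i => ?_) (fun i => ?_) i <;>
          simp [padZeros, Fin.append_left, Fin.append_right]
      map_smul' := by
        intro r a
        funext i
        refine Fin.addCases (fun i => ?_) (fun i => ?_) i <;>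
          simp [padZeros, Fin.append_left, Fin.append_right] } with hpad
  have hpadapp : ∀ v, pad v = padZeros m v := fun _ => rfl
  have hpadinj : Function.Injective pad := by
    intro a b h
    funext i
    have := congrFun h (Fin.castAdd m i)
    simpa [hpadapp, padZeros, Fin.append_left] using this
  set D := Submodule.span F (padZeros m '' (C : Set (Fin n → F)) ∪ {y}) with hD
  have hDeq : D = C.map pad ⊔ Submodule.span F {y} := by
    rw [hD, Submodule.span_union]
    congr 1
    have : padZeros m '' (C : Set (Fin n → F)) = pad '' (C : Set (Fin n → F)) := rfl
    rw [this, Submodule.span_image, Submodule.span_eq]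
  -- membership characterization
  have hmemD : ∀ z, z ∈ D ↔ ∃ c ∈ C, ∃ α : F, z = padZeros m c + α • y := by
    intro z
    rw [hDeq, Submodule.mem_sup]
    constructor
    · rintro ⟨a, ha, b, hb, rfl⟩
      obtain ⟨c, hc, rfl⟩ := Submodule.mem_map.mp ha
      obtain ⟨α, rfl⟩ := Submodule.mem_span_singleton.mp hb
      exact ⟨c, hc, α, rfl⟩
    · rintro ⟨c, hc, α, rfl⟩
      exact ⟨pad c, Submodule.mem_map_of_mem hc, α • y,
        Submodule.mem_span_singleton.mpr ⟨α, rfl⟩, rfl⟩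
  -- the key norm formula
  have hconst : ∀ α : F, α ≠ 0 → hammingNorm (fun _ : Fin m => α) = m := by
    intro α hα
    simp [hammingNorm, hα]
  have hsplit : ∀ (c : Fin n → F) (α : F),
      padZeros m c + α • y = Fin.append (c + α • x) (fun _ => α) := by
    intro c α
    funext i
    refine Fin.addCases (fun i => ?_) (fun i => ?_) i <;>
      simp [padZeros, hy, Fin.append_left, Fin.append_right]
  have hnormz : ∀ (c : Fin n → F) (α : F),
      hammingNorm (padZeros m c + α • y) =
        hammingNorm (c + α • x) + (if α = 0 then 0 else m) := by
    intro c α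
    rw [hsplit, hammingNorm_append]
    by_cases hα : α = 0
    · simp [hα, hammingNorm]
    · simp [hα, hconst α hα]
  -- x "appended" facts
  have hyne : y ≠ 0 := by
    intro h
    apply hx
    have hx0 : x = 0 := by
      funext i
      have := congrFun h (Fin.castAdd m i)
      simpa [hy, Fin.append_left] using this
    rw [hx0]; exact C.zero_mem
  have hynotin : y ∉ C.map pad := by
    rintro ⟨c, hc, hcy⟩
    apply hx
    have : x = c := by
      funext i
      have := congrFun hcy (Fin.castAdd m i)
      simpa [hpadapp, padZeros, hy, Fin.append_left] using this.symm
    rwa [this]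
  -- dimension
  have hrank : Module.finrank F D = k + 1 := by
    have hinf : C.map pad ⊓ Submodule.span F {y} = ⊥ := by
      rw [eq_bot_iff]
      rintro z ⟨hz1, hz2⟩
      obtain ⟨α, rfl⟩ := Submodule.mem_span_singleton.mp hz2
      rcases eq_or_ne α 0 with h | h
      · simp [h]
      · exfalso
        apply hynotin
        have := (C.map pad).smul_mem α⁻¹ hz1
        rwa [smul_smul, inv_mul_cancel₀ h, one_smul] at this
    have h1 : Module.finrank F (C.map pad) = k := by
      rw [← hk]
      exact (Submodule.equivMapOfInjective pad hpadinj C).finrank_eq.symm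
    have h2 : Module.finrank F (Submodule.span F {y}) = 1 := finrank_span_singleton hyne
    have h3 := Submodule.finrank_sup_add_finrank_inf_eq (C.map pad) (Submodule.span F {y})
    rw [hinf, finrank_bot, h1, h2] at h3
    rw [hDeq]
    omega
  refine ⟨hrank, ?_⟩
  -- the weight sets
  set Wset : Set ℕ := {w : ℕ | ∃ c ∈ C, hammingNorm c = w} with hWset
  set T : Set ℕ := (fun c => hammingDist c x + m) '' (C : Set (Fin n → F)) with hT
  have hS : {w : ℕ | ∃ z ∈ D, hammingNorm z = w} = Wset ∪ T := by
    ext w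
    constructor
    · rintro ⟨z, hz, rfl⟩
      obtain ⟨c, hc, α, rfl⟩ := (hmemD z).mp hz
      rw [hnormz]
      by_cases hα : α = 0
      · left
        exact ⟨c, hc, by simp [hα]⟩
      · right
        refine ⟨-(α⁻¹ • c), C.neg_mem (C.smul_mem _ hc), ?_⟩
        simp only [hα, if_false]
        congr 1
        rw [hammingDist_eq_hammingNorm]
        have : - -(α⁻¹ • c) + x = α⁻¹ • (c + α • x) := by
          rw [neg_neg, smul_add, smul_smul, inv_mul_cancel₀ hα, one_smul]
        rw [this, hammingNorm_smul_ne_zero (inv_ne_zero hα)]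
    · rintro (⟨c, hc, rfl⟩ | ⟨c, hc, rfl⟩)
      · refine ⟨padZeros m c, (hmemD _).mpr ⟨c, hc, 0, by simp⟩, ?_⟩
        have := hnormz c 0
        simpa using this
      · refine ⟨padZeros m (-c) + (1 : F) • y,
          (hmemD _).mpr ⟨-c, C.neg_mem hc, 1, rfl⟩, ?_⟩
        rw [hnormz]
        simp only [one_ne_zero, if_false]
        congr 1
        rw [hammingDist_eq_hammingNorm]
        congr 1
        module
  rw [hS]
  -- finiteness
  have hWfin : Wset.Finite := by
    have : Wset = hammingNorm '' (C : Set (Fin n → F)) := by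
      ext w; simp [hWset, eq_comm]
    rw [this]
    exact (Set.toFinite _).image _
  have hTfin : T.Finite := (Set.toFinite _).image _
  -- disjointness
  have hdisj : Disjoint Wset T := by
    rw [Set.disjoint_left]
    rintro w ⟨c, hc, rfl⟩ ⟨c', hc', h'⟩
    have h1 : hammingNorm c ≤ m := hm.2 ⟨c, hc, rfl⟩
    have h2 : 1 ≤ hammingDist c' x :=
      Nat.one_le_iff_ne_zero.mpr (hammingDist_ne_zero.mpr (fun h => hx (h ▸ hc')))
    have h3 : hammingDist c' x + m = hammingNorm c := h'
    omega
  have hcount := Set.ncard_union_eq hdisj hWfin hTfin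
  rw [hcount, hw]
  -- cardinality of T
  have hTcard : T.ncard = q ^ k := by
    rw [hT, Set.ncard_image_of_injOn]
    · have hNat : Nat.card (C : Set (Fin n → F)) = q ^ k := by
        haveI : Fintype C := Fintype.ofFinite _
        have : Nat.card (C : Set (Fin n → F)) = Nat.card C := rfl
        rw [this, Nat.card_eq_fintype_card, Module.card_eq_pow_finrank (K := F), hk]
      rw [← Nat.card_coe_set_eq, hNat]
    · intro a ha b hb hab
      have hab' : hammingDist a x + m = hammingDist b x + m := hab
      by_contra hne
      exact hdist a ha b hb hne (by omega)
  rw [hTcard]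
  -- arithmetic
  have h0 : 0 < q - 1 := by omega
  have h1 : 1 ≤ q ^ k := Nat.one_le_pow _ _ (by omega)
  have h2 : q ^ (k + 1) = q ^ k * q := pow_succ q k
  have h4 : q ^ k * (q - 1) = q ^ (k + 1) - q ^ k := by
    rw [Nat.mul_sub, mul_one, ← h2]
  have h5 : q ^ (k + 1) - 1 = (q ^ k - 1) + q ^ k * (q - 1) := by
    have h3 : q ^ k ≤ q ^ (k + 1) := Nat.pow_le_pow_right (by omega) (by omega)
    omega
  rw [h5, Nat.add_mul_div_right _ _ h0]
  ring
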